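/- Let q0 = 2^s, q = 2q0², and define G⁺(T) = 1 + Σ_{i=0}^{s-1} T^{2^i q0}(1+T)^{2^i(q0+1)-q0} + T^{q/2} ∈ F_2[T]. Then for every a ∈ F_q of trace 1, the element a^{2q0-1} is a root of G⁺. -/

import Mathlib

open Polynomial

/-- With `q₀ = 2^s`, `q = 2q₀²`, and
`G⁺(T) = 1 + Σ_{i=0}^{s-1} T^{2^i q₀}(1+T)^{2^i(q₀+1)-q₀} + T^{q/2} ∈ F₂[T]`,
for every `a ∈ F_q` of trace `1` the element `a^{2q₀-1}` is a root of `G⁺`. -/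
theorem stmt_4 (s : ℕ) (hs : 1 ≤ s) (q0 q : ℕ) (hq0 : q0 = 2 ^ s) (hq : q = 2 * q0 ^ 2)
    (G : Polynomial (ZMod 2))
    (hG : G = 1 + (∑ i ∈ Finset.range s,
      X ^ (2 ^ i * q0) * (1 + X) ^ (2 ^ i * (q0 + 1) - q0)) + X ^ (q / 2))
    (F : Type*) [Field F] [Fintype F] [Algebra (ZMod 2) F]
    (hF : Fintype.card F = q) :
    ∀ a : F, 1 + (∑ i ∈ Finset.range (2 * s + 1), a ^ (2 ^ i)) = 0 →
      Polynomial.aeval (a ^ (2 * q0 - 1)) G = 0 := by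
  intro a ha
  haveI hchar : CharP F 2 :=
    charP_of_injective_algebraMap (algebraMap (ZMod 2) F).injective 2
  have h2 : (2 : F) = 0 := by exact_mod_cast CharP.cast_eq_zero F 2
  have hq0pos : 0 < q0 := by rw [hq0]; positivity
  have hq' : q = 2 * (q0 * q0) := by rw [hq]; ring
  have hq0q : q0 ≤ q := by nlinarith
  have hfrob : ∀ (i : ℕ) (x y : F), (x + y) ^ (2 ^ i : ℕ) = x ^ (2^i:ℕ) + y ^ (2^i:ℕ) :=
    fun i x y => add_pow_char_pow x y 2 i
  -- expand the polynomial evaluation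
  rw [hG]
  simp only [map_add, map_one, map_sum, map_mul, map_pow, aeval_X]
  set b : F := a ^ (2 * q0 - 1) with hb
  by_cases ha0 : a = 0
  · exfalso
    rw [ha0] at ha
    rw [Finset.sum_eq_zero (fun i _ => zero_pow (by positivity : (2:ℕ)^i ≠ 0)),
      add_zero] at ha
    exact one_ne_zero ha
  -- basic facts
  have haq : a ^ q = a := by rw [← hF]; exact FiniteField.pow_card a
  set v : F := a ^ q0 with hv
  set r : F := a ^ (q0 * q0) with hr
  set g : F := a ^ (q - q0) with hgdef
  have hq2 : q / 2 = q0 * q0 := by omega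
  have hrr : r * r = a := by
    rw [hr, ← pow_add, show q0*q0 + q0*q0 = q by omega, haq]
  have hgv : g * v = a := by
    rw [hgdef, hv, ← pow_add, Nat.sub_add_cancel hq0q, haq]
  have hbq0 : b ^ q0 = g := by
    rw [hb, hgdef, ← pow_mul]
    congr 1
    rw [Nat.sub_mul, one_mul]
    congr 1
    rw [hq']; ring
  have hbq2 : b ^ (q/2) = g ^ q0 := by rw [hq2, pow_mul, hbq0]
  have hgqr : g ^ q0 * r = v := by
    have e2 : (q - q0) * q0 + q0 * q0 = q * q0 := by
      rw [Nat.sub_mul]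
      exact Nat.sub_add_cancel (Nat.mul_le_mul_right q0 hq0q)
    calc g ^ q0 * r = a ^ ((q - q0) * q0) * a ^ (q0 * q0) := by
          rw [hgdef, ← pow_mul, hr]
      _ = a ^ (q * q0) := by rw [← pow_add, e2]
      _ = v := by rw [pow_mul, haq, hv]
  set c : F := a + a ^ (2 * q0) with hcdef
  have hab : a * b = a ^ (2 * q0) := by
    calc a * b = a ^ (2*q0 - 1) * a := by rw [hb, mul_comm]
      _ = a ^ (2*q0 - 1 + 1) := (pow_succ a _).symm
      _ = a ^ (2*q0) := by congr 1; omega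
  have hca : a * (1 + b) = c := by rw [mul_add, mul_one, hab, hcdef]
  have hv2 : a ^ (2 * q0) = v * v := by
    rw [hv, ← pow_add]; congr 1; omega
  have hcq0 : c ^ q0 = v + a := by
    rw [hcdef, hq0, add_pow_char_pow, ← hq0, ← pow_mul, ← hv]
    congr 1
    rw [show 2 * q0 * q0 = q by rw [hq']; ring, haq]
  set u : F := a + v with hu
  set t : F := u + (g + g * g) with ht
  have hA' : (c ^ q0 * c) * g = (v * a) * t := by
    rw [hcq0, hcdef, hv2, ht, hu]
    linear_combination (a * v + v * v - a * g) * hgv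
  -- the per-term identity
  have hT : ∀ i ∈ Finset.range s,
      c ^ q0 * (b ^ (2^i * q0) * (1 + b) ^ (2^i * (q0+1) - q0)) = v * t ^ (2^i : ℕ) := by
    intro i _
    have hk : (0:ℕ) < 2 ^ i := by positivity
    have hiq : q0 ≤ 2 ^ i * (q0 + 1) :=
      le_trans (Nat.le_succ q0) (Nat.le_mul_of_pos_left _ hk)
    set e : ℕ := 2 ^ i * (q0 + 1) - q0 with he
    have hqe : q0 + e = 2 ^ i * (q0 + 1) := Nat.add_sub_cancel' hiq
    refine mul_right_cancel₀ (pow_ne_zero e ha0) ?_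
    have hva : v ^ (2^i : ℕ) * a ^ (2^i : ℕ) = v * a ^ e := by
      rw [hv, ← pow_mul, ← pow_add, ← pow_add]
      congr 1
      calc q0 * 2 ^ i + 2 ^ i = 2 ^ i * (q0 + 1) := by ring
        _ = q0 + e := hqe.symm
    calc c ^ q0 * (b ^ (2^i * q0) * (1 + b) ^ e) * a ^ e
        = c ^ q0 * b ^ (2^i * q0) * ((1 + b) * a) ^ e := by rw [mul_pow]; ring
      _ = c ^ q0 * b ^ (2^i * q0) * c ^ e := by rw [mul_comm (1+b) a, hca]
      _ = (c ^ q0 * c ^ e) * (b ^ q0) ^ (2^i : ℕ) := by rw [pow_mul']; ring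
      _ = c ^ (q0 + e) * g ^ (2^i : ℕ) := by rw [← pow_add, hbq0]
      _ = c ^ ((q0 + 1) * 2^i) * g ^ (2^i : ℕ) := by rw [hqe, mul_comm (2^i)]
      _ = (c ^ (q0+1) * g) ^ (2^i : ℕ) := by rw [mul_pow, pow_mul]
      _ = ((v * a) * t) ^ (2^i : ℕ) := by rw [pow_succ, hA']
      _ = (v ^ (2^i:ℕ) * a ^ (2^i:ℕ)) * t ^ (2^i:ℕ) := by rw [mul_pow, mul_pow]
      _ = v * t ^ (2^i : ℕ) * a ^ e := by rw [hva]; ring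
  by_cases hc0 : c = 0
  · -- then 1 + b = 0
    have h1b : (1 : F) + b = 0 := by
      rcases mul_eq_zero.mp (hca.trans hc0) with h | h
      · exact absurd h ha0
      · exact h
    have hb1 : b = 1 := by linear_combination h1b - h2
    have hz : ∀ i ∈ Finset.range s,
        b ^ (2^i * q0) * (1 + b) ^ (2^i * (q0+1) - q0) = 0 := by
      intro i _
      have hne : 2 ^ i * (q0 + 1) - q0 ≠ 0 := by
        have : q0 + 1 ≤ 2 ^ i * (q0 + 1) := Nat.le_mul_of_pos_left _ (by positivity)
        omega
      rw [h1b, zero_pow hne, mul_zero]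
    rw [Finset.sum_eq_zero hz, hb1, one_pow, add_zero]
    linear_combination h2
  · -- main case
    have htr : ∑ i ∈ Finset.range (2*s), a ^ (2^i:ℕ) = 1 + a ^ (2^(2*s):ℕ) := by
      rw [Finset.sum_range_succ] at ha
      linear_combination ha - (1 + a ^ (2^(2*s):ℕ)) * h2
    have hsum : ∑ i ∈ Finset.range s, t ^ (2^i : ℕ) = 1 + r + (g + g ^ q0) := by
      have hti : ∀ i ∈ Finset.range s, t ^ (2^i : ℕ)
          = (a ^ (2^i:ℕ) + a ^ (2^(s+i):ℕ)) + (g ^ (2^i:ℕ) + g ^ (2^(i+1):ℕ)) := by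
        intro i _
        have h1 : t = a + v + (g + g * g) := by rw [ht, hu]
        have hx2 : v ^ (2^i:ℕ) = a ^ (2^(s+i):ℕ) := by
          rw [hv, hq0, ← pow_mul, ← pow_add]
        have hx3 : (g * g : F) ^ (2^i:ℕ) = g ^ (2^(i+1):ℕ) := by
          rw [← pow_two, ← pow_mul, ← pow_succ']
        rw [h1, hfrob, hfrob, hfrob, hx2, hx3]
      rw [Finset.sum_congr rfl hti, Finset.sum_add_distrib, Finset.sum_add_distrib,
        Finset.sum_add_distrib]
      have e1 : ∑ i ∈ Finset.range s, a ^ (2^(s+i):ℕ)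
          = ∑ i ∈ Finset.Ico s (s + s), a ^ (2^i:ℕ) := by
        rw [Finset.sum_Ico_eq_sum_range]
        simp
      have e2 : (∑ i ∈ Finset.range s, a ^ (2^i:ℕ))
          + ∑ i ∈ Finset.Ico s (s + s), a ^ (2^i:ℕ)
          = ∑ i ∈ Finset.range (2*s), a ^ (2^i:ℕ) := by
        rw [Finset.range_eq_Ico, show 2*s = s + s by ring, Finset.range_eq_Ico]
        exact Finset.sum_Ico_consecutive _ (Nat.zero_le s) (Nat.le_add_right s s)
      have e3 : ∑ i ∈ Finset.range s, (g ^ (2^i:ℕ) + g ^ (2^(i+1):ℕ))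
          = g + g ^ q0 := by
        rw [Finset.sum_congr rfl
          (fun i _ => (CharTwo.sub_eq_add (g ^ (2^i:ℕ)) (g ^ (2^(i+1):ℕ))).symm),
          Finset.sum_range_sub' (fun i => g ^ (2^i:ℕ)), CharTwo.sub_eq_add,
          pow_zero, pow_one, hq0]
      rw [Finset.sum_add_distrib] at e3
      rw [e1, e2, htr, e3]
      congr 1
      rw [hr, show (2:ℕ)^(2*s) = q0 * q0 by rw [hq0, ← pow_add]; ring_nf]
    have hmain : c ^ q0 *
        ((1 : F) + (∑ i ∈ Finset.range s,
          b ^ (2^i * q0) * (1 + b) ^ (2^i * (q0+1) - q0)) + b ^ (q/2)) = 0 := by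
      rw [mul_add, mul_add, Finset.mul_sum, Finset.sum_congr rfl hT, ← Finset.mul_sum,
        hsum, hbq2, hcq0, mul_one]
      linear_combination hgv - (g ^ q0) * hrr + r * hgqr
        + (a + v * r + v + v * (g ^ q0)) * h2
    rcases mul_eq_zero.mp hmain with h | h
    · exact absurd (pow_eq_zero_iff (by omega : q0 ≠ 0) |>.mp h) hc0
    · exact h
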